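/- arXiv:2011.11768 — 7 statements merged into one kernel-verified Lean document; each statement's English description precedes it below -/
import Mathlib

section
/- Suppose all eight social alignment parameters s₁₁, s₁₂, s₂₁, s₂₂, s̃₁₁, s̃₁₂, s̃₂₁, s̃₂₂ are positive and all four mutation rates m₁, m̃₁, m₂, m̃₂ lie in the interval [0, 1]. Then the general two-strategy, two-population convergence–divergence game has at least one equilibrium in the unit square: there exists (x, y) ∈ [0,1] × [0,1] with G₁(x,y) = 0 and G₂(x,y) = 0. -/
open Set

noncomputable def G1 (s11 s12 st11 st12 m1 mt1 : ℝ) (x y : ℝ) : ℝ :=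
  ((1 - x) - mt1) * x * (s11 * x + s12 * (1 - y) * x) -
    (x - m1) * (1 - x) * (st11 * (1 - x) + st12 * y * (1 - x))

noncomputable def G2 (s21 s22 st21 st22 m2 mt2 : ℝ) (x y : ℝ) : ℝ :=
  ((1 - y) - mt2) * y * (s22 * y + s21 * (1 - x) * y) -
    (y - m2) * (1 - y) * (st22 * (1 - y) + st21 * x * (1 - y))


noncomputable def curveFn (f : ℝ → ℝ → ℝ) : ℝ → ℝ :=
  fun x => sSup ({0} ∪ {y ∈ Icc (0:ℝ) 1 | 0 ≤ f x y})

lemma curve_exists (f : ℝ → ℝ → ℝ) (hf : Continuous fun p : ℝ × ℝ => f p.1 p.2)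
    (H1 : ∀ x ∈ Icc (0:ℝ) 1, ∀ y ∈ Icc (0:ℝ) 1, ∀ y' ∈ Icc (0:ℝ) 1,
      y < y' → 0 ≤ f x y' → 0 < f x y)
    (H2 : ∀ y ∈ Icc (0:ℝ) 1, 0 < f 0 y)
    (H3 : ∀ y ∈ Icc (0:ℝ) 1, f 1 y < 0) :
    ∃ g : ℝ → ℝ, ContinuousOn g (Icc 0 1) ∧ g 0 = 1 ∧ g 1 = 0 ∧
      (∀ x ∈ Icc (0:ℝ) 1, g x ∈ Icc (0:ℝ) 1) ∧
      (∀ x ∈ Icc (0:ℝ) 1, g x ≠ 0 → g x ≠ 1 → f x (g x) = 0) := by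
  have hfy : ∀ x : ℝ, Continuous fun y => f x y := by
    intro x
    exact hf.comp (continuous_const.prodMk continuous_id)
  have hSne : ∀ x : ℝ, ({0} ∪ {y ∈ Icc (0:ℝ) 1 | 0 ≤ f x y}).Nonempty :=
    fun x => ⟨0, Or.inl rfl⟩
  have hSle : ∀ x : ℝ, ∀ z ∈ ({0} ∪ {y ∈ Icc (0:ℝ) 1 | 0 ≤ f x y}), z ≤ 1 := by
    intro x z hz
    rcases hz with hz | hz
    · simp only [mem_singleton_iff] at hz; simp [hz]
    · exact hz.1.2
  have hSbdd : ∀ x : ℝ, BddAbove ({0} ∪ {y ∈ Icc (0:ℝ) 1 | 0 ≤ f x y}) :=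
    fun x => ⟨1, hSle x⟩
  have hgmem : ∀ x, curveFn f x ∈ Icc (0:ℝ) 1 := by
    intro x
    constructor
    · exact le_csSup (hSbdd x) (Or.inl rfl)
    · exact csSup_le (hSne x) (hSle x)
  have hgS : ∀ x, curveFn f x ∈ ({0} ∪ {y ∈ Icc (0:ℝ) 1 | 0 ≤ f x y}) := by
    intro x
    have hSclosed : IsClosed ({0} ∪ {y ∈ Icc (0:ℝ) 1 | 0 ≤ f x y}) := by
      refine isClosed_singleton.union ?_
      have : {y ∈ Icc (0:ℝ) 1 | 0 ≤ f x y} = Icc (0:ℝ) 1 ∩ {y | 0 ≤ f x y} := rfl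
      rw [this]
      exact isClosed_Icc.inter (isClosed_le continuous_const (hfy x))
    exact hSclosed.csSup_mem (hSne x) (hSbdd x)
  -- key1 : below the curve f is positive
  have key1 : ∀ x ∈ Icc (0:ℝ) 1, ∀ y ∈ Icc (0:ℝ) 1, y < curveFn f x → 0 < f x y := by
    intro x hx y hy hlt
    rcases hgS x with h0 | hmem
    · simp only [mem_singleton_iff] at h0
      rw [h0] at hlt
      exact absurd hlt (not_lt.2 hy.1)
    · exact H1 x hx y hy (curveFn f x) hmem.1 hlt hmem.2
  -- key2 : above the curve f is negative
  have key2 : ∀ x : ℝ, ∀ y ∈ Icc (0:ℝ) 1, curveFn f x < y → f x y < 0 := by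
    intro x y hy hlt
    by_contra h
    push_neg at h
    exact absurd (le_csSup (hSbdd x) (Or.inr ⟨hy, h⟩)) (not_le.2 hlt)
  -- key3 : on the curve (away from endpoints) f vanishes
  have key3 : ∀ x ∈ Icc (0:ℝ) 1, curveFn f x ≠ 0 → curveFn f x ≠ 1 → f x (curveFn f x) = 0 := by
    intro x hx h0 h1
    have hge : 0 ≤ f x (curveFn f x) := by
      rcases hgS x with hm | hm
      · exact absurd hm h0
      · exact hm.2
    have hlt1 : curveFn f x < 1 := lt_of_le_of_ne (hgmem x).2 h1
    have hge0 : 0 ≤ curveFn f x := (hgmem x).1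
    have hle : f x (curveFn f x) ≤ 0 := by
      by_contra h
      push_neg at h
      have hcont : ContinuousAt (fun y => f x y) (curveFn f x) := (hfy x).continuousAt
      have hev : ∀ᶠ y in nhds (curveFn f x), 0 < f x y := hcont.eventually_const_lt h
      rw [Metric.eventually_nhds_iff] at hev
      obtain ⟨δ, hδ, hev⟩ := hev
      have hygx : curveFn f x < min 1 (curveFn f x + δ/2) := lt_min hlt1 (by linarith)
      have hydist : dist (min 1 (curveFn f x + δ/2)) (curveFn f x) < δ := by
        rw [Real.dist_eq, abs_lt]
        constructor
        · linarith [hygx]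
        · linarith [min_le_right (1:ℝ) (curveFn f x + δ/2)]
      have hfy0 : 0 < f x (min 1 (curveFn f x + δ/2)) := hev hydist
      have hmem : min 1 (curveFn f x + δ/2) ∈ ({0} ∪ {y ∈ Icc (0:ℝ) 1 | 0 ≤ f x y}) :=
        Or.inr ⟨⟨le_trans hge0 hygx.le, min_le_left _ _⟩, hfy0.le⟩
      exact absurd (le_csSup (hSbdd x) hmem) (not_le.2 hygx)
    linarith
  -- continuity
  have hgcont : ContinuousOn (curveFn f) (Icc 0 1) := by
    rw [Metric.continuousOn_iff]
    intro x₀ hx₀ ε hε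
    have hm0 : 0 ≤ curveFn f x₀ := (hgmem x₀).1
    have hm1 : curveFn f x₀ ≤ 1 := (hgmem x₀).2
    have hupper : ∃ δ > 0, ∀ x ∈ Icc (0:ℝ) 1, dist x x₀ < δ →
        curveFn f x < curveFn f x₀ + ε := by
      by_cases hc : 1 < curveFn f x₀ + ε
      · exact ⟨1, one_pos, fun x hx _ => lt_of_le_of_lt (hgmem x).2 hc⟩
      · push_neg at hc
        have hypm : curveFn f x₀ + ε/2 ∈ Icc (0:ℝ) 1 := ⟨by linarith, by linarith⟩
        have hfneg : f x₀ (curveFn f x₀ + ε/2) < 0 := key2 x₀ _ hypm (by linarith)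
        have hcont : ContinuousAt (fun x => f x (curveFn f x₀ + ε/2)) x₀ :=
          (hf.comp (continuous_id.prodMk continuous_const)).continuousAt
        have hev : ∀ᶠ x in nhds x₀, f x (curveFn f x₀ + ε/2) < 0 :=
          hcont.eventually_lt_const hfneg
        rw [Metric.eventually_nhds_iff] at hev
        obtain ⟨δ, hδ, hev⟩ := hev
        refine ⟨δ, hδ, fun x hx hdx => ?_⟩
        have hle : curveFn f x ≤ curveFn f x₀ + ε/2 := by
          by_contra hgt
          push_neg at hgt
          exact absurd (key1 x hx _ hypm hgt) (not_lt.2 (hev hdx).le)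
        linarith
    have hlower : ∃ δ > 0, ∀ x ∈ Icc (0:ℝ) 1, dist x x₀ < δ →
        curveFn f x₀ - ε < curveFn f x := by
      by_cases hc : curveFn f x₀ - ε < 0
      · exact ⟨1, one_pos, fun x hx _ => lt_of_lt_of_le hc (hgmem x).1⟩
      · push_neg at hc
        have hymm : curveFn f x₀ - ε/2 ∈ Icc (0:ℝ) 1 := ⟨by linarith, by linarith⟩
        have hfpos : 0 < f x₀ (curveFn f x₀ - ε/2) := key1 x₀ hx₀ _ hymm (by linarith)
        have hcont : ContinuousAt (fun x => f x (curveFn f x₀ - ε/2)) x₀ :=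
          (hf.comp (continuous_id.prodMk continuous_const)).continuousAt
        have hev : ∀ᶠ x in nhds x₀, 0 < f x (curveFn f x₀ - ε/2) :=
          hcont.eventually_const_lt hfpos
        rw [Metric.eventually_nhds_iff] at hev
        obtain ⟨δ, hδ, hev⟩ := hev
        refine ⟨δ, hδ, fun x hx hdx => ?_⟩
        have hle : curveFn f x₀ - ε/2 ≤ curveFn f x :=
          le_csSup (hSbdd x) (Or.inr ⟨hymm, (hev hdx).le⟩)
        linarith
    obtain ⟨δ₁, hδ₁, h₁⟩ := hupper
    obtain ⟨δ₂, hδ₂, h₂⟩ := hlower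
    refine ⟨min δ₁ δ₂, lt_min hδ₁ hδ₂, fun x hx hdx => ?_⟩
    have u1 := h₁ x hx (lt_of_lt_of_le hdx (min_le_left _ _))
    have u2 := h₂ x hx (lt_of_lt_of_le hdx (min_le_right _ _))
    rw [Real.dist_eq, abs_lt]
    constructor <;> linarith
  -- boundary values
  have hg0 : curveFn f 0 = 1 := by
    refine le_antisymm (hgmem 0).2 ?_
    exact le_csSup (hSbdd 0)
      (Or.inr ⟨⟨zero_le_one, le_refl 1⟩, (H2 1 ⟨zero_le_one, le_refl 1⟩).le⟩)
  have hg1 : curveFn f 1 = 0 := by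
    refine le_antisymm ?_ (hgmem 1).1
    refine csSup_le (hSne 1) ?_
    rintro z (hz | hz)
    · simp only [mem_singleton_iff] at hz; simp [hz]
    · exact absurd hz.2 (not_le.2 (H3 z hz.1))
  exact ⟨curveFn f, hgcont, hg0, hg1, fun x _ => hgmem x, key3⟩



lemma claim_decr (s11 s12 st11 st12 m1 mt1 : ℝ)
    (hs11 : 0 < s11) (hs12 : 0 < s12) (hst11 : 0 < st11) (hst12 : 0 < st12)
    (hm1 : 0 < m1) (hmt1 : 0 < mt1) (hsum : m1 + mt1 < 1) :
    ∀ x ∈ Icc (0:ℝ) 1, ∀ y ∈ Icc (0:ℝ) 1, ∀ y' ∈ Icc (0:ℝ) 1, y < y' →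
      0 ≤ G1 s11 s12 st11 st12 m1 mt1 x y' → 0 < G1 s11 s12 st11 st12 m1 mt1 x y := by
  intro x hx y hy y' hy' hlt hge
  have hid : ∀ z : ℝ, G1 s11 s12 st11 st12 m1 mt1 x z =
      (1 - x - mt1) * x^2 * (s11 + s12*(1 - z)) -
        (x - m1) * (1-x)^2 * (st11 + st12*z) := by
    intro z; unfold G1; ring
  have hA : 0 < s11 + s12*(1-y) := by nlinarith [hy.2]
  have hB : 0 < st11 + st12*y := by nlinarith [hy.1]
  rcases lt_or_ge x m1 with hxm | hxm
  · rw [hid]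
    have hP : 0 ≤ (1 - x - mt1) * x^2 := mul_nonneg (by linarith) (sq_nonneg x)
    have hQ : 0 < (m1 - x) * (1-x)^2 :=
      mul_pos (by linarith) (pow_pos (by linarith) 2)
    nlinarith [mul_nonneg hP hA.le, mul_pos hQ hB]
  · rcases le_or_gt x (1 - mt1) with hxm2 | hxm2
    · have hd : 0 < s12*((1 - x - mt1) * x^2) + st12*((x - m1)*(1-x)^2) := by
        rcases lt_or_eq_of_le hxm2 with hlt2 | heq
        · have hP : 0 < (1 - x - mt1) * x^2 :=
            mul_pos (by linarith) (pow_pos (by linarith) 2)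
          have hQ : 0 ≤ (x - m1)*(1-x)^2 := mul_nonneg (by linarith) (sq_nonneg _)
          nlinarith [mul_pos hs12 hP, mul_nonneg hst12.le hQ]
        · have h0 : 1 - x - mt1 = 0 := by linarith
          have h1x : 1 - x = mt1 := by linarith
          have hQ : 0 < (x - m1)*(1-x)^2 := by
            rw [h1x]
            exact mul_pos (by linarith) (pow_pos hmt1 2)
          rw [h0]
          nlinarith [mul_pos hst12 hQ]
      have hdiff : G1 s11 s12 st11 st12 m1 mt1 x y =
          G1 s11 s12 st11 st12 m1 mt1 x y' +
            (y' - y) * (s12*((1 - x - mt1) * x^2) + st12*((x - m1)*(1-x)^2)) := by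
        unfold G1; ring
      rw [hdiff]
      nlinarith [mul_pos (sub_pos.2 hlt) hd]
    · exfalso
      have hA' : 0 < s11 + s12*(1-y') := by nlinarith [hy'.2]
      have hB' : 0 < st11 + st12*y' := by nlinarith [hy'.1]
      have hP : (1 - x - mt1) * x^2 < 0 :=
        mul_neg_of_neg_of_pos (by linarith) (pow_pos (by linarith) 2)
      have hQ : 0 ≤ (x - m1)*(1-x)^2 := mul_nonneg (by linarith) (sq_nonneg _)
      rw [hid] at hge
      nlinarith [mul_neg_of_neg_of_pos hP hA', mul_nonneg hQ hB'.le]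

lemma claim_incr (s11 s12 st11 st12 m1 mt1 : ℝ)
    (hs11 : 0 < s11) (hs12 : 0 < s12) (hst11 : 0 < st11) (hst12 : 0 < st12)
    (hm1le : m1 ≤ 1) (hmt1le : mt1 ≤ 1) (hsum : 1 < m1 + mt1) :
    ∀ u ∈ Icc (0:ℝ) 1, ∀ y ∈ Icc (0:ℝ) 1, ∀ y' ∈ Icc (0:ℝ) 1, y < y' →
      G1 s11 s12 st11 st12 m1 mt1 u y' ≤ 0 → G1 s11 s12 st11 st12 m1 mt1 u y < 0 := by
  intro u hu y hy y' hy' hlt hge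
  have hm1 : 0 < m1 := by linarith
  have hmt1 : 0 < mt1 := by linarith
  have hid : ∀ z : ℝ, G1 s11 s12 st11 st12 m1 mt1 u z =
      (1 - u - mt1) * u^2 * (s11 + s12*(1 - z)) -
        (u - m1) * (1-u)^2 * (st11 + st12*z) := by
    intro z; unfold G1; ring
  have hA : 0 < s11 + s12*(1-y) := by nlinarith [hy.2]
  have hB : 0 < st11 + st12*y := by nlinarith [hy.1]
  rcases lt_or_ge u (1 - mt1) with h1 | h1
  · exfalso
    have hA' : 0 < s11 + s12*(1-y') := by nlinarith [hy'.2]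
    have hB' : 0 < st11 + st12*y' := by nlinarith [hy'.1]
    have hP : 0 ≤ (1 - u - mt1) * u^2 := mul_nonneg (by linarith) (sq_nonneg u)
    have hQ : 0 < (m1 - u) * (1-u)^2 :=
      mul_pos (by linarith) (pow_pos (by linarith) 2)
    rw [hid] at hge
    nlinarith [mul_nonneg hP hA'.le, mul_pos hQ hB']
  · rcases le_or_gt u m1 with h2 | h2
    · have hd : s12*((1 - u - mt1) * u^2) + st12*((u - m1)*(1-u)^2) < 0 := by
        rcases lt_or_eq_of_le h1 with hlt2 | heq
        · have hP : (1 - u - mt1) * u^2 < 0 :=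
            mul_neg_of_neg_of_pos (by linarith) (pow_pos (by linarith) 2)
          have hQ : (u - m1)*(1-u)^2 ≤ 0 :=
            mul_nonpos_of_nonpos_of_nonneg (by linarith) (sq_nonneg _)
          nlinarith [mul_neg_of_pos_of_neg hs12 hP, mul_nonpos_of_nonneg_of_nonpos hst12.le hQ]
        · have h0 : 1 - u - mt1 = 0 := by linarith
          have h1u : 1 - u = mt1 := by linarith
          have hQ : (u - m1)*(1-u)^2 < 0 := by
            rw [h1u]
            exact mul_neg_of_neg_of_pos (by linarith) (pow_pos hmt1 2)
          rw [h0]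
          nlinarith [mul_neg_of_pos_of_neg hst12 hQ]
      have hdiff : G1 s11 s12 st11 st12 m1 mt1 u y =
          G1 s11 s12 st11 st12 m1 mt1 u y' +
            (y' - y) * (s12*((1 - u - mt1) * u^2) + st12*((u - m1)*(1-u)^2)) := by
        unfold G1; ring
      rw [hdiff]
      nlinarith [mul_neg_of_pos_of_neg (sub_pos.2 hlt) hd]
    · rw [hid]
      have hP : (1 - u - mt1) * u^2 < 0 :=
        mul_neg_of_neg_of_pos (by linarith) (pow_pos (by linarith) 2)
      have hQ : 0 ≤ (u - m1)*(1-u)^2 := mul_nonneg (by linarith) (sq_nonneg _)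
      nlinarith [mul_neg_of_neg_of_pos hP hA, mul_nonneg hQ hB.le]

-- IVT helpers
lemma ivt_dec (h : ℝ → ℝ) (hc : ContinuousOn h (Icc 0 1))
    (h0 : 0 ≤ h 0) (h1 : h 1 ≤ 0) : ∃ t ∈ Icc (0:ℝ) 1, h t = 0 := by
  obtain ⟨t, ht, hteq⟩ := intermediate_value_Icc' zero_le_one hc ⟨h1, h0⟩
  exact ⟨t, ht, hteq⟩

lemma ivt_inc (h : ℝ → ℝ) (hc : ContinuousOn h (Icc 0 1))
    (h0 : h 0 ≤ 0) (h1 : 0 ≤ h 1) : ∃ t ∈ Icc (0:ℝ) 1, h t = 0 := by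
  obtain ⟨t, ht, hteq⟩ := intermediate_value_Icc zero_le_one hc ⟨h0, h1⟩
  exact ⟨t, ht, hteq⟩

set_option maxHeartbeats 2000000 in
theorem exists_equilibrium
    (s11 s12 s21 s22 st11 st12 st21 st22 m1 mt1 m2 mt2 : ℝ)
    (hs11 : 0 < s11) (hs12 : 0 < s12) (hs21 : 0 < s21) (hs22 : 0 < s22)
    (hst11 : 0 < st11) (hst12 : 0 < st12) (hst21 : 0 < st21) (hst22 : 0 < st22)
    (hm1 : m1 ∈ Set.Icc (0:ℝ) 1) (hmt1 : mt1 ∈ Set.Icc (0:ℝ) 1)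
    (hm2 : m2 ∈ Set.Icc (0:ℝ) 1) (hmt2 : mt2 ∈ Set.Icc (0:ℝ) 1) :
    ∃ x ∈ Set.Icc (0:ℝ) 1, ∃ y ∈ Set.Icc (0:ℝ) 1,
      G1 s11 s12 st11 st12 m1 mt1 x y = 0 ∧ G2 s21 s22 st21 st22 m2 mt2 x y = 0 := by
  have hG1c : Continuous fun p : ℝ × ℝ => G1 s11 s12 st11 st12 m1 mt1 p.1 p.2 := by
    unfold G1; fun_prop
  have hG2c : Continuous fun p : ℝ × ℝ => G2 s21 s22 st21 st22 m2 mt2 p.1 p.2 := by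
    unfold G2; fun_prop
  have h01 : (0:ℝ) ∈ Icc (0:ℝ) 1 := ⟨le_refl 0, zero_le_one⟩
  have h11 : (1:ℝ) ∈ Icc (0:ℝ) 1 := ⟨zero_le_one, le_refl 1⟩
  -- corner-value identities
  have eG2bot : ∀ x : ℝ, G2 s21 s22 st21 st22 m2 mt2 x 0 = m2 * (st22 + st21 * x) := by
    intro x; unfold G2; ring
  have eG2top : ∀ x : ℝ,
      G2 s21 s22 st21 st22 m2 mt2 x 1 = -(mt2 * (s22 + s21 * (1 - x))) := by
    intro x; unfold G2; ring
  have eG1left : ∀ y : ℝ, G1 s11 s12 st11 st12 m1 mt1 0 y = m1 * (st11 + st12 * y) := by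
    intro y; unfold G1; ring
  have eG1right : ∀ y : ℝ,
      G1 s11 s12 st11 st12 m1 mt1 1 y = -(mt1 * (s11 + s12 * (1 - y))) := by
    intro y; unfold G1; ring
  -- weak sign facts
  have wG2bot : ∀ x ∈ Icc (0:ℝ) 1, 0 ≤ G2 s21 s22 st21 st22 m2 mt2 x 0 := by
    intro x hx; rw [eG2bot]; nlinarith [mul_nonneg hst21.le hx.1, hm2.1]
  have wG2top : ∀ x ∈ Icc (0:ℝ) 1, G2 s21 s22 st21 st22 m2 mt2 x 1 ≤ 0 := by
    intro x hx; rw [eG2top]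
    nlinarith [mul_nonneg hs21.le (by linarith [hx.2] : (0:ℝ) ≤ 1 - x), hmt2.1]
  have wG1left : ∀ y ∈ Icc (0:ℝ) 1, 0 ≤ G1 s11 s12 st11 st12 m1 mt1 0 y := by
    intro y hy; rw [eG1left]; nlinarith [mul_nonneg hst12.le hy.1, hm1.1]
  have wG1right : ∀ y ∈ Icc (0:ℝ) 1, G1 s11 s12 st11 st12 m1 mt1 1 y ≤ 0 := by
    intro y hy; rw [eG1right]
    nlinarith [mul_nonneg hs12.le (by linarith [hy.2] : (0:ℝ) ≤ 1 - y), hmt1.1]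
  -- degenerate cases
  by_cases hm10 : m1 = 0
  · have hzero : ∀ y : ℝ, G1 s11 s12 st11 st12 m1 mt1 0 y = 0 := by
      intro y; rw [eG1left, hm10]; ring
    obtain ⟨t, ht, hteq⟩ := ivt_dec (fun y => G2 s21 s22 st21 st22 m2 mt2 0 y)
      ((hG2c.comp (continuous_const.prodMk continuous_id)).continuousOn)
      (wG2bot 0 h01) (wG2top 0 h01)
    exact ⟨0, h01, t, ht, hzero t, hteq⟩
  by_cases hmt10 : mt1 = 0
  · have hzero : ∀ y : ℝ, G1 s11 s12 st11 st12 m1 mt1 1 y = 0 := by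
      intro y; rw [eG1right, hmt10]; ring
    obtain ⟨t, ht, hteq⟩ := ivt_dec (fun y => G2 s21 s22 st21 st22 m2 mt2 1 y)
      ((hG2c.comp (continuous_const.prodMk continuous_id)).continuousOn)
      (wG2bot 1 h11) (wG2top 1 h11)
    exact ⟨1, h11, t, ht, hzero t, hteq⟩
  by_cases hm20 : m2 = 0
  · have hzero : ∀ x : ℝ, G2 s21 s22 st21 st22 m2 mt2 x 0 = 0 := by
      intro x; rw [eG2bot, hm20]; ring
    obtain ⟨t, ht, hteq⟩ := ivt_dec (fun x => G1 s11 s12 st11 st12 m1 mt1 x 0)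
      ((hG1c.comp (continuous_id.prodMk continuous_const)).continuousOn)
      (wG1left 0 h01) (wG1right 0 h01)
    exact ⟨t, ht, 0, h01, hteq, hzero t⟩
  by_cases hmt20 : mt2 = 0
  · have hzero : ∀ x : ℝ, G2 s21 s22 st21 st22 m2 mt2 x 1 = 0 := by
      intro x; rw [eG2top, hmt20]; ring
    obtain ⟨t, ht, hteq⟩ := ivt_dec (fun x => G1 s11 s12 st11 st12 m1 mt1 x 1)
      ((hG1c.comp (continuous_id.prodMk continuous_const)).continuousOn)
      (wG1left 1 h11) (wG1right 1 h11)
    exact ⟨t, ht, 1, h11, hteq, hzero t⟩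
  have hm1p : 0 < m1 := lt_of_le_of_ne hm1.1 (Ne.symm hm10)
  have hmt1p : 0 < mt1 := lt_of_le_of_ne hmt1.1 (Ne.symm hmt10)
  have hm2p : 0 < m2 := lt_of_le_of_ne hm2.1 (Ne.symm hm20)
  have hmt2p : 0 < mt2 := lt_of_le_of_ne hmt2.1 (Ne.symm hmt20)
  -- strict signs of G2 on bottom and top edges
  have sG2bot : ∀ x ∈ Icc (0:ℝ) 1, 0 < G2 s21 s22 st21 st22 m2 mt2 x 0 := by
    intro x hx; rw [eG2bot]; nlinarith [mul_nonneg hst21.le hx.1]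
  have sG2top : ∀ x ∈ Icc (0:ℝ) 1, G2 s21 s22 st21 st22 m2 mt2 x 1 < 0 := by
    intro x hx; rw [eG2top]
    nlinarith [mul_nonneg hs21.le (by linarith [hx.2] : (0:ℝ) ≤ 1 - x)]
  by_cases hsum1 : m1 + mt1 = 1
  · -- degenerate band : the line x = m1 is a zero line of G1
    have hmt1e : mt1 = 1 - m1 := by linarith
    have hzero : ∀ y : ℝ, G1 s11 s12 st11 st12 m1 mt1 m1 y = 0 := by
      intro y; unfold G1; rw [hmt1e]; ring
    obtain ⟨t, ht, hteq⟩ := ivt_dec (fun y => G2 s21 s22 st21 st22 m2 mt2 m1 y)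
      ((hG2c.comp (continuous_const.prodMk continuous_id)).continuousOn)
      (wG2bot m1 hm1) (wG2top m1 hm1)
    exact ⟨m1, hm1, t, ht, hzero t, hteq⟩
  rcases lt_or_gt_of_ne hsum1 with hsum | hsum
  · -- decreasing case
    obtain ⟨g, hgcont, hg0, hg1, hgmem, hgzero⟩ :=
      curve_exists (G1 s11 s12 st11 st12 m1 mt1) hG1c
        (claim_decr s11 s12 st11 st12 m1 mt1 hs11 hs12 hst11 hst12 hm1p hmt1p hsum)
        (fun y hy => by
          rw [eG1left]; nlinarith [mul_nonneg hst12.le hy.1])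
        (fun y hy => by
          rw [eG1right]
          nlinarith [mul_nonneg hs12.le (by linarith [hy.2] : (0:ℝ) ≤ 1 - y)])
    have hθc : ContinuousOn (fun x => G2 s21 s22 st21 st22 m2 mt2 x (g x)) (Icc 0 1) :=
      hG2c.comp_continuousOn (continuousOn_id.prodMk hgcont)
    obtain ⟨t, ht, hteq⟩ := ivt_inc (fun x => G2 s21 s22 st21 st22 m2 mt2 x (g x)) hθc
      (by show G2 s21 s22 st21 st22 m2 mt2 0 (g 0) ≤ 0
          rw [hg0]; exact (sG2top 0 h01).le)
      (by show 0 ≤ G2 s21 s22 st21 st22 m2 mt2 1 (g 1)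
          rw [hg1]; exact (sG2bot 1 h11).le)
    have hteq' : G2 s21 s22 st21 st22 m2 mt2 t (g t) = 0 := hteq
    have hg0ne : g t ≠ 0 := by
      intro h; rw [h] at hteq'
      exact absurd hteq' (ne_of_gt (sG2bot t ht))
    have hg1ne : g t ≠ 1 := by
      intro h; rw [h] at hteq'
      exact absurd hteq' (ne_of_lt (sG2top t ht))
    exact ⟨t, ht, g t, hgmem t ht, hgzero t ht hg0ne hg1ne, hteq'⟩
  · -- increasing case
    obtain ⟨g, hgcont, hg0, hg1, hgmem, hgzero⟩ :=
      curve_exists (fun x y => -G1 s11 s12 st11 st12 m1 mt1 (1 - x) y)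
        ((hG1c.comp ((continuous_const.sub continuous_fst).prodMk continuous_snd)).neg)
        (fun x hx y hy y' hy' hlt hge => by
          have h1x : 1 - x ∈ Icc (0:ℝ) 1 := ⟨by linarith [hx.2], by linarith [hx.1]⟩
          have hge' : (0:ℝ) ≤ -G1 s11 s12 st11 st12 m1 mt1 (1 - x) y' := hge
          have := claim_incr s11 s12 st11 st12 m1 mt1 hs11 hs12 hst11 hst12
            hm1.2 hmt1.2 hsum (1 - x) h1x y hy y' hy' hlt (by linarith)
          show (0:ℝ) < -G1 s11 s12 st11 st12 m1 mt1 (1 - x) y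
          linarith)
        (fun y hy => by
          show (0:ℝ) < -G1 s11 s12 st11 st12 m1 mt1 (1 - 0) y
          rw [(by norm_num : (1:ℝ) - 0 = 1), eG1right]
          nlinarith [mul_nonneg hs12.le (by linarith [hy.2] : (0:ℝ) ≤ 1 - y)])
        (fun y hy => by
          show -G1 s11 s12 st11 st12 m1 mt1 (1 - 1) y < 0
          rw [(by norm_num : (1:ℝ) - 1 = 0), eG1left]
          nlinarith [mul_nonneg hst12.le hy.1])
    have hθc : ContinuousOn (fun x => G2 s21 s22 st21 st22 m2 mt2 (1 - x) (g x))
        (Icc 0 1) :=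
      hG2c.comp_continuousOn (((continuous_const.sub continuous_id).continuousOn).prodMk hgcont)
    obtain ⟨t, ht, hteq⟩ :=
      ivt_inc (fun x => G2 s21 s22 st21 st22 m2 mt2 (1 - x) (g x)) hθc
      (by show G2 s21 s22 st21 st22 m2 mt2 (1 - 0) (g 0) ≤ 0
          rw [hg0, (by norm_num : (1:ℝ) - 0 = 1)]
          exact (sG2top 1 h11).le)
      (by show 0 ≤ G2 s21 s22 st21 st22 m2 mt2 (1 - 1) (g 1)
          rw [hg1, (by norm_num : (1:ℝ) - 1 = 0)]
          exact (sG2bot 0 h01).le)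
    have hteq' : G2 s21 s22 st21 st22 m2 mt2 (1 - t) (g t) = 0 := hteq
    have h1t : 1 - t ∈ Icc (0:ℝ) 1 := ⟨by linarith [ht.2], by linarith [ht.1]⟩
    have hg0ne : g t ≠ 0 := by
      intro h; rw [h] at hteq'
      exact absurd hteq' (ne_of_gt (sG2bot (1 - t) h1t))
    have hg1ne : g t ≠ 1 := by
      intro h; rw [h] at hteq'
      exact absurd hteq' (ne_of_lt (sG2top (1 - t) h1t))
    have hzg : -G1 s11 s12 st11 st12 m1 mt1 (1 - t) (g t) = 0 := hgzero t ht hg0ne hg1ne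
    exact ⟨1 - t, h1t, g t, hgmem t ht, by linarith, hteq'⟩
end

section
/- Suppose all eight social alignment parameters s₁₁, s₁₂, s₂₁, s₂₂, s̃₁₁, s̃₁₂, s̃₂₁, s̃₂₂ are positive and all four mutation rates m₁, m̃₁, m₂, m̃₂ lie in the interval [0, 1]. Then the set of equilibria of the general two-strategy, two-population convergence–divergence game in the unit square, {(x,y) ∈ [0,1] × [0,1] : G₁(x,y) = 0 and G₂(x,y) = 0}, is finite and has at most nine elements. -/
open Polynomial in
lemma finset_sum_count_le (s : Finset ℝ) (M : Multiset ℝ) :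
    ∑ x ∈ s, M.count x ≤ Multiset.card M := by
  classical
  calc ∑ x ∈ s, M.count x = ∑ x ∈ s ∩ M.toFinset, M.count x := by
        refine (Finset.sum_subset (Finset.inter_subset_left) ?_).symm
        intro x hx hx'
        have : x ∉ M.toFinset := fun h => hx' (Finset.mem_inter.2 ⟨hx, h⟩)
        simpa [Multiset.count_eq_zero] using fun h => this (Multiset.mem_toFinset.2 h)
    _ ≤ ∑ x ∈ M.toFinset, M.count x := by
        refine Finset.sum_le_sum_of_subset_of_nonneg Finset.inter_subset_right ?_
        intros; exact Nat.zero_le _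
    _ = Multiset.card M := M.toFinset_sum_count_eq

open Polynomial in
lemma mass_lemma (f : Polynomial ℝ) (D : ℕ) (hdeg : f.natDegree ≤ D)
    (hsign : (-1 : ℝ) ^ D * f.eval 0 * f.eval 1 < 0) :
    (Multiset.card (f.roots.filter (fun r => r ∈ Set.Icc (0:ℝ) 1))) < D := by
  have hf : f ≠ 0 := by
    rintro rfl; simp at hsign
  by_contra hge
  push_neg at hge
  have h1 : f.roots.filter (fun r => r ∈ Set.Icc (0:ℝ) 1) ≤ f.roots := Multiset.filter_le _ _
  have hcard : Multiset.card f.roots ≤ D := le_trans (f.card_roots' ) hdeg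
  have hc1 := Multiset.card_le_card h1
  have heq : f.roots.filter (fun r => r ∈ Set.Icc (0:ℝ) 1) = f.roots :=
    Multiset.eq_of_le_of_card_le h1 (by omega)
  have hcard2 : Multiset.card f.roots = f.natDegree := by
    have := f.card_roots'
    omega
  have hD : Multiset.card f.roots = D := by omega
  have hall : ∀ r ∈ f.roots, r ∈ Set.Icc (0:ℝ) 1 := by
    intro r hr
    rw [← heq] at hr
    exact (Multiset.mem_filter.1 hr).2
  have hprod := Polynomial.C_leadingCoeff_mul_prod_multiset_X_sub_C hcard2
  -- evaluate at 0 and 1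
  have he0 : f.eval 0 = f.leadingCoeff * (f.roots.map (fun r => 0 - r)).prod := by
    conv_lhs => rw [← hprod]
    simp [eval_multiset_prod, Multiset.map_map, Function.comp]
  have he1 : f.eval 1 = f.leadingCoeff * (f.roots.map (fun r => 1 - r)).prod := by
    conv_lhs => rw [← hprod]
    simp [eval_multiset_prod, Multiset.map_map, Function.comp]
  have hneg : (f.roots.map (fun r => 0 - r)).prod
      = (-1 : ℝ) ^ D * (f.roots.map (fun r => r)).prod := by
    rw [← hD]
    rw [show (fun r : ℝ => 0 - r) = (fun r : ℝ => -1 * r) by funext r; ring]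
    rw [Multiset.prod_map_mul]
    simp
  have hnn1 : (0:ℝ) ≤ (f.roots.map (fun r => r)).prod := by
    apply Multiset.prod_nonneg
    intro a ha
    obtain ⟨r, hr, rfl⟩ := Multiset.mem_map.1 ha
    exact (hall r hr).1
  have hnn2 : (0:ℝ) ≤ (f.roots.map (fun r => 1 - r)).prod := by
    apply Multiset.prod_nonneg
    intro a ha
    obtain ⟨r, hr, rfl⟩ := Multiset.mem_map.1 ha
    linarith [(hall r hr).2]
  have : (-1:ℝ)^D * f.eval 0 * f.eval 1
      = f.leadingCoeff^2 * ((-1:ℝ)^D * (-1:ℝ)^D) * ((f.roots.map (fun r => r)).prod * (f.roots.map (fun r => 1 - r)).prod) := by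
    rw [he0, he1, hneg]; ring
  rw [this] at hsign
  have hsq : ((-1:ℝ)^D * (-1:ℝ)^D) = 1 := by
    rw [← pow_add]
    exact Even.neg_one_pow ⟨D, rfl⟩
  rw [hsq] at hsign
  nlinarith [sq_nonneg f.leadingCoeff, mul_nonneg hnn1 hnn2]


lemma resultant_aux (k0 k1 k2 k3 p q y : ℝ) (h1 : p + q * y = 0)
    (h2 : k0 + k1 * y + k2 * y ^ 2 + k3 * y ^ 3 = 0) :
    k0 * q ^ 3 - k1 * q ^ 2 * p + k2 * q * p ^ 2 - k3 * p ^ 3 = 0 := by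
  linear_combination q ^ 3 * h2 +
    (-(k1 * q ^ 2) + k2 * q * (p - q * y) - k3 * (p ^ 2 - p * q * y + q ^ 2 * y ^ 2)) * h1

open Polynomial in
lemma root_set_ncard {p : Polynomial ℝ} (hp : p ≠ 0) {n : ℕ} (hn : p.natDegree ≤ n) :
    {y : ℝ | p.eval y = 0}.Finite ∧ {y : ℝ | p.eval y = 0}.ncard ≤ n := by
  have hsub : {y : ℝ | p.eval y = 0} = ↑p.roots.toFinset := by
    ext y
    simp [Multiset.mem_toFinset, mem_roots, hp, IsRoot]
  rw [hsub]
  refine ⟨(p.roots.toFinset).finite_toSet, ?_⟩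
  rw [Set.ncard_coe_finset]
  calc p.roots.toFinset.card ≤ Multiset.card p.roots := p.roots.toFinset_card_le
    _ ≤ p.natDegree := p.card_roots'
    _ ≤ n := hn

lemma ncard_biUnion_le' {α β : Type*} (s : Finset α) (f : α → Set β) :
    (⋃ x ∈ s, f x).ncard ≤ ∑ x ∈ s, (f x).ncard := by
  classical
  induction s using Finset.induction with
  | empty => simp
  | @insert a t hnot ih =>
      rw [Finset.set_biUnion_insert, Finset.sum_insert hnot]
      exact le_trans (Set.ncard_union_le _ _) (by gcongr)

lemma slices_count (E : Set (ℝ × ℝ)) (T : Finset ℝ) (w : ℝ → ℕ)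
    (hT : ∀ p ∈ E, p.1 ∈ T)
    (h : ∀ x ∈ T, {y : ℝ | (x, y) ∈ E}.Finite ∧ {y : ℝ | (x, y) ∈ E}.ncard ≤ w x) :
    E.Finite ∧ E.ncard ≤ ∑ x ∈ T, w x := by
  classical
  have hsub : E ⊆ ⋃ x ∈ T, (fun y => (x, y)) '' {y : ℝ | (x, y) ∈ E} := by
    rintro ⟨x, y⟩ hp
    exact Set.mem_biUnion (hT _ hp) ⟨y, hp, rfl⟩
  have hfin : (⋃ x ∈ T, (fun y => (x, y)) '' {y : ℝ | (x, y) ∈ E}).Finite := by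
    refine Set.Finite.biUnion T.finite_toSet fun x hx => ((h x hx).1).image _
  refine ⟨hfin.subset hsub, ?_⟩
  calc E.ncard ≤ (⋃ x ∈ T, (fun y => (x, y)) '' {y : ℝ | (x, y) ∈ E}).ncard :=
        Set.ncard_le_ncard hsub hfin
    _ ≤ ∑ x ∈ T, ((fun y => (x, y)) '' {y : ℝ | (x, y) ∈ E}).ncard := by
        exact ncard_biUnion_le' T _
    _ ≤ ∑ x ∈ T, w x := by
        refine Finset.sum_le_sum fun x hx => ?_
        have hinj : Function.Injective (fun y : ℝ => (x, y)) := fun a b h' => by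
          simpa using congrArg Prod.snd h'
        rw [Set.ncard_image_of_injective _ hinj]
        exact (h x hx).2

open Polynomial in
lemma master
    (G1f G2f : ℝ → ℝ → ℝ) (c0f c1f c2f c3f Pf Qf : ℝ → ℝ)
    (PP QP C0 C1 C2 C3 : Polynomial ℝ) (B : Finset ℝ) (α β D : ℕ)
    (hPP : ∀ x, PP.eval x = Pf x) (hQP : ∀ x, QP.eval x = Qf x)
    (hC0 : ∀ x, C0.eval x = c0f x) (hC1 : ∀ x, C1.eval x = c1f x)
    (hC2 : ∀ x, C2.eval x = c2f x) (hC3 : ∀ x, C3.eval x = c3f x)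
    (hG1 : ∀ x y, G1f x y = x ^ α * (1 - x) ^ β * (Pf x + Qf x * y))
    (hG2 : ∀ x y, G2f x y = c0f x + c1f x * y + c2f x * y ^ 2 + c3f x * y ^ 3)
    (hc3 : ∀ x ∈ Set.Icc (0:ℝ) 1, c3f x ≠ 0)
    (hdeg : (C0 * QP ^ 3 - C1 * QP ^ 2 * PP + C2 * QP * PP ^ 2 - C3 * PP ^ 3).natDegree ≤ D)
    (hsign : (-1:ℝ) ^ D
        * (C0 * QP ^ 3 - C1 * QP ^ 2 * PP + C2 * QP * PP ^ 2 - C3 * PP ^ 3).eval 0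
        * (C0 * QP ^ 3 - C1 * QP ^ 2 * PP + C2 * QP * PP ^ 2 - C3 * PP ^ 3).eval 1 < 0)
    (hB : ∀ x : ℝ, x ^ α * (1 - x) ^ β = 0 → x ∈ B)
    (hBIcc : ∀ x ∈ B, x ∈ Set.Icc (0:ℝ) 1)
    (hDB : 3 * B.card + D ≤ 10) :
    {p : ℝ × ℝ | p ∈ Set.Icc (0:ℝ) 1 ×ˢ Set.Icc (0:ℝ) 1 ∧
        G1f p.1 p.2 = 0 ∧ G2f p.1 p.2 = 0}.Finite ∧
    {p : ℝ × ℝ | p ∈ Set.Icc (0:ℝ) 1 ×ˢ Set.Icc (0:ℝ) 1 ∧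
        G1f p.1 p.2 = 0 ∧ G2f p.1 p.2 = 0}.ncard ≤ 9 := by
  classical
  set F : Polynomial ℝ := C0 * QP ^ 3 - C1 * QP ^ 2 * PP + C2 * QP * PP ^ 2 - C3 * PP ^ 3 with hFdef
  set E : Set (ℝ × ℝ) := {p : ℝ × ℝ | p ∈ Set.Icc (0:ℝ) 1 ×ˢ Set.Icc (0:ℝ) 1 ∧
        G1f p.1 p.2 = 0 ∧ G2f p.1 p.2 = 0} with hEdef
  have hF0 : F ≠ 0 := by
    intro h; rw [h] at hsign; simp at hsign
  have hFeval : ∀ x : ℝ, F.eval x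
      = c0f x * Qf x ^ 3 - c1f x * Qf x ^ 2 * Pf x + c2f x * Qf x * Pf x ^ 2
        - c3f x * Pf x ^ 3 := by
    intro x
    simp [hFdef, hPP, hQP, hC0, hC1, hC2, hC3]
  -- any equilibrium (x,y) with nonzero boundary factor gives F.eval x = 0
  have hroot : ∀ x y : ℝ, x ^ α * (1 - x) ^ β ≠ 0 → G1f x y = 0 → G2f x y = 0 →
      F.eval x = 0 := by
    intro x y hx0 h1 h2
    rw [hG1] at h1
    have h1' : Pf x + Qf x * y = 0 := by
      rcases mul_eq_zero.1 h1 with h | h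
      · exact absurd h hx0
      · exact h
    rw [hG2] at h2
    rw [hFeval]
    exact resultant_aux _ _ _ _ _ _ y h1' h2
  set Tr : Finset ℝ := F.roots.toFinset.filter (fun x => x ∈ Set.Icc (0:ℝ) 1) with hTr
  set T : Finset ℝ := B ∪ Tr with hTdef
  set w : ℝ → ℕ := fun x => if x ∈ B ∨ (Pf x = 0 ∧ Qf x = 0) then 3 else 1 with hw
  have hT : ∀ p ∈ E, p.1 ∈ T := by
    rintro ⟨x, y⟩ hp
    obtain ⟨hmem, h1, h2⟩ := hp
    by_cases hx0 : x ^ α * (1 - x) ^ β = 0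
    · exact Finset.mem_union_left _ (hB x hx0)
    · refine Finset.mem_union_right _ ?_
      rw [hTr]
      refine Finset.mem_filter.2 ⟨Multiset.mem_toFinset.2 ?_, hmem.1⟩
      rw [mem_roots hF0]
      exact hroot x y hx0 h1 h2
  -- slice bounds
  have hslice3 : ∀ x ∈ Set.Icc (0:ℝ) 1,
      {y : ℝ | G2f x y = 0}.Finite ∧ {y : ℝ | G2f x y = 0}.ncard ≤ 3 := by
    intro x hx
    set gp : Polynomial ℝ := C (c3f x) * X ^ 3 + C (c2f x) * X ^ 2 + C (c1f x) * X + C (c0f x)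
      with hgp
    have hgp0 : gp ≠ 0 := by
      intro h
      have := congrArg (fun q => Polynomial.coeff q 3) h
      simp [hgp, coeff_C] at this
      exact hc3 x hx this
    have hgpdeg : gp.natDegree ≤ 3 := by
      rw [hgp]; compute_degree
    have hgev : ∀ y : ℝ, gp.eval y = G2f x y := by
      intro y; rw [hG2, hgp]; simp; ring
    have hset : {y : ℝ | G2f x y = 0} = {y : ℝ | gp.eval y = 0} := by
      ext y; simp [hgev]
    rw [hset]
    exact root_set_ncard hgp0 hgpdeg
  have hslices : ∀ x ∈ T, {y : ℝ | (x, y) ∈ E}.Finite ∧ {y : ℝ | (x, y) ∈ E}.ncard ≤ w x := by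
    intro x hxT
    by_cases hcond : x ∈ B ∨ (Pf x = 0 ∧ Qf x = 0)
    · have hxI : x ∈ Set.Icc (0:ℝ) 1 := by
        rcases Finset.mem_union.1 hxT with h | h
        · exact hBIcc x h
        · exact (Finset.mem_filter.1 h).2
      have h3 := hslice3 x hxI
      have hsub : {y : ℝ | (x, y) ∈ E} ⊆ {y : ℝ | G2f x y = 0} := by
        intro y hy; exact hy.2.2
      rw [hw]; simp only [if_pos hcond]
      exact ⟨h3.1.subset hsub, le_trans (Set.ncard_le_ncard hsub h3.1) h3.2⟩
    · have hxB : x ∉ B := fun h => hcond (Or.inl h)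
      have hPQ : ¬(Pf x = 0 ∧ Qf x = 0) := fun h => hcond (Or.inr h)
      have hfac : x ^ α * (1 - x) ^ β ≠ 0 := fun h => hxB (hB x h)
      have hsub : {y : ℝ | (x, y) ∈ E}.Subsingleton := by
        intro y1 hy1 y2 hy2
        have e1 : Pf x + Qf x * y1 = 0 := by
          have := hy1.2.1; rw [hG1] at this
          rcases mul_eq_zero.1 this with h | h
          · exact absurd h hfac
          · exact h
        have e2 : Pf x + Qf x * y2 = 0 := by
          have := hy2.2.1; rw [hG1] at this
          rcases mul_eq_zero.1 this with h | h
          · exact absurd h hfac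
          · exact h
        have hQ : Qf x ≠ 0 := by
          intro hq
          rw [hq] at e1
          exact hPQ ⟨by linarith, hq⟩
        have : Qf x * y1 = Qf x * y2 := by linarith
        exact mul_left_cancel₀ hQ this
      rw [hw]; simp only [if_neg hcond]
      refine ⟨hsub.finite, ?_⟩
      rcases hsub.eq_empty_or_singleton with h | ⟨a, h⟩
      · rw [h]; simp
      · rw [h]; simp
  have hsum : ∑ x ∈ T, w x ≤ 9 := by
    have hdisj : Disjoint B (Tr \ B) := Finset.disjoint_sdiff
    have hTU : T = B ∪ (Tr \ B) := by
      rw [hTdef, Finset.union_sdiff_self_eq_union]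
    rw [hTU, Finset.sum_union hdisj]
    have hBsum : ∑ x ∈ B, w x = 3 * B.card := by
      have hwB : ∀ x ∈ B, w x = 3 := fun x hx => by rw [hw]; simp only [if_pos (Or.inl hx)]
      rw [Finset.sum_congr rfl hwB, Finset.sum_const, smul_eq_mul, mul_comm]
    set M : Multiset ℝ := F.roots.filter (fun r => r ∈ Set.Icc (0:ℝ) 1) with hM
    have hmass : Multiset.card M < D := mass_lemma F D hdeg hsign
    have hTrB : ∑ x ∈ Tr \ B, w x ≤ Multiset.card M := by
      refine le_trans (Finset.sum_le_sum ?_) (finset_sum_count_le _ M)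
      intro x hx
      obtain ⟨hxTr, hxB⟩ := Finset.mem_sdiff.1 hx
      obtain ⟨hxroots, hxI⟩ := Finset.mem_filter.1 hxTr
      have hxmem : x ∈ F.roots := Multiset.mem_toFinset.1 hxroots
      have hcount : M.count x = rootMultiplicity x F := by
        rw [hM, Multiset.count_filter, if_pos hxI, count_roots]
      by_cases hcond : x ∈ B ∨ (Pf x = 0 ∧ Qf x = 0)
      · have hpq : Pf x = 0 ∧ Qf x = 0 := hcond.resolve_left hxB
        rw [hw]; simp only [if_pos hcond]
        rw [hcount]
        rw [Polynomial.le_rootMultiplicity_iff hF0]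
        obtain ⟨u, hu⟩ : (X - C x) ∣ PP := dvd_iff_isRoot.2 (by rw [IsRoot, hPP]; exact hpq.1)
        obtain ⟨v, hv⟩ : (X - C x) ∣ QP := dvd_iff_isRoot.2 (by rw [IsRoot, hQP]; exact hpq.2)
        exact ⟨C0 * v ^ 3 - C1 * v ^ 2 * u + C2 * v * u ^ 2 - C3 * u ^ 3, by
          rw [hFdef, hu, hv]; ring⟩
      · rw [hw]; simp only [if_neg hcond]
        rw [hcount, ← count_roots, Nat.one_le_iff_ne_zero, ← Nat.pos_iff_ne_zero]
        exact Multiset.count_pos.2 hxmem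
    omega
  obtain ⟨hfin, hcard⟩ := slices_count E T w hT hslices
  exact ⟨hfin, le_trans hcard hsum⟩

open Polynomial in
lemma deg_comb {C0 C1 C2 C3 PP QP : Polynomial ℝ} {dp : ℕ}
    (h0 : C0.natDegree ≤ 1) (h1 : C1.natDegree ≤ 1)
    (h2 : C2.natDegree ≤ 1) (h3 : C3.natDegree ≤ 1)
    (hp : PP.natDegree ≤ dp) (hq : QP.natDegree ≤ dp) :
    (C0 * QP ^ 3 - C1 * QP ^ 2 * PP + C2 * QP * PP ^ 2 - C3 * PP ^ 3).natDegree
      ≤ 1 + 3 * dp := by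
  have hq3 : (QP ^ 3).natDegree ≤ 3 * dp :=
    le_trans (natDegree_pow_le) (by nlinarith)
  have hq2 : (QP ^ 2).natDegree ≤ 2 * dp :=
    le_trans (natDegree_pow_le) (by nlinarith)
  have hp2 : (PP ^ 2).natDegree ≤ 2 * dp :=
    le_trans (natDegree_pow_le) (by nlinarith)
  have hp3 : (PP ^ 3).natDegree ≤ 3 * dp :=
    le_trans (natDegree_pow_le) (by nlinarith)
  have t0 : (C0 * QP ^ 3).natDegree ≤ 1 + 3 * dp :=
    le_trans natDegree_mul_le (by omega)
  have t1 : (C1 * QP ^ 2 * PP).natDegree ≤ 1 + 3 * dp := by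
    refine le_trans natDegree_mul_le ?_
    have := natDegree_mul_le (p := C1) (q := QP ^ 2)
    omega
  have t2 : (C2 * QP * PP ^ 2).natDegree ≤ 1 + 3 * dp := by
    refine le_trans natDegree_mul_le ?_
    have := natDegree_mul_le (p := C2) (q := QP)
    omega
  have t3 : (C3 * PP ^ 3).natDegree ≤ 1 + 3 * dp :=
    le_trans natDegree_mul_le (by omega)
  refine le_trans (natDegree_sub_le _ _) (max_le ?_ t3)
  refine le_trans (natDegree_add_le _ _) (max_le ?_ t2)
  exact le_trans (natDegree_sub_le _ _) (max_le t0 t1)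

set_option maxHeartbeats 2000000 in
open Polynomial in
theorem equilibria_finite_card_le_nine
    (s11 s12 s21 s22 st11 st12 st21 st22 m1 mt1 m2 mt2 : ℝ)
    (hs11 : 0 < s11) (hs12 : 0 < s12) (hs21 : 0 < s21) (hs22 : 0 < s22)
    (hst11 : 0 < st11) (hst12 : 0 < st12) (hst21 : 0 < st21) (hst22 : 0 < st22)
    (hm1 : m1 ∈ Set.Icc (0:ℝ) 1) (hmt1 : mt1 ∈ Set.Icc (0:ℝ) 1)
    (hm2 : m2 ∈ Set.Icc (0:ℝ) 1) (hmt2 : mt2 ∈ Set.Icc (0:ℝ) 1) :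
    ({p : ℝ × ℝ | p ∈ Set.Icc (0:ℝ) 1 ×ˢ Set.Icc (0:ℝ) 1 ∧
        G1 s11 s12 st11 st12 m1 mt1 p.1 p.2 = 0 ∧
        G2 s21 s22 st21 st22 m2 mt2 p.1 p.2 = 0}).Finite ∧
    ({p : ℝ × ℝ | p ∈ Set.Icc (0:ℝ) 1 ×ˢ Set.Icc (0:ℝ) 1 ∧
        G1 s11 s12 st11 st12 m1 mt1 p.1 p.2 = 0 ∧
        G2 s21 s22 st21 st22 m2 mt2 p.1 p.2 = 0}).ncard ≤ 9 := by
  obtain ⟨hm10, hm11⟩ := hm1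
  obtain ⟨hmt10, hmt11⟩ := hmt1
  obtain ⟨hm20, hm21⟩ := hm2
  obtain ⟨hmt20, hmt21⟩ := hmt2
  set E0 : ℝ := (st12*(1-mt2)+st11)*st11^2*(s22+s21)
      + (st11+m2*st12)*(st12+st11)^2*st22 with hE0def
  set E1 : ℝ := -((s11+mt2*s12)*(s11+s12)^2*s22 + (s11+s12*(1-m2))*s11^2*(st22+st21))
    with hE1def
  have hE0 : (0:ℝ) < E0 := by
    have h1 : (0:ℝ) < (st12*(1-mt2)+st11) := by nlinarith
    have h2 : (0:ℝ) < st11+m2*st12 := by nlinarith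
    have hA := mul_pos (mul_pos h1 (pow_pos hst11 2)) (add_pos hs22 hs21)
    have hB := mul_pos (mul_pos h2 (pow_pos (add_pos hst12 hst11) 2)) hst22
    rw [hE0def]; linarith
  have hE1 : E1 < 0 := by
    have h1 : (0:ℝ) < s11+mt2*s12 := by nlinarith
    have h2 : (0:ℝ) < s11+s12*(1-m2) := by nlinarith
    have hA := mul_pos (mul_pos h1 (pow_pos (add_pos hs11 hs12) 2)) hs22
    have hB := mul_pos (mul_pos h2 (pow_pos hs11 2)) (add_pos hst22 hst21)
    rw [hE1def]; linarith
  have hc3 : ∀ x ∈ Set.Icc (0:ℝ) 1,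
      -((s22+s21*(1-x)) + (st22+st21*x)) ≠ 0 := by
    intro x hx h
    obtain ⟨hx0, hx1⟩ := hx
    nlinarith
  have hG2 : ∀ x y : ℝ, G2 s21 s22 st21 st22 m2 mt2 x y
      = m2*(st22+st21*x) + (-(1+2*m2)*(st22+st21*x)) * y
        + ((1-mt2)*(s22+s21*(1-x)) + (2+m2)*(st22+st21*x)) * y ^ 2
        + (-((s22+s21*(1-x)) + (st22+st21*x))) * y ^ 3 := by
    intro x y; simp only [G2]; ring
  rcases eq_or_lt_of_le hm10 with hm1z | hm1pos
  · rcases eq_or_lt_of_le hmt10 with hmt1z | hmt1pos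
    · -- Case D : m1 = 0, mt1 = 0
      rw [← hm1z, ← hmt1z]
      refine master (G1 s11 s12 st11 st12 0 0) (G2 s21 s22 st21 st22 m2 mt2)
          (fun x => m2*(st22+st21*x)) (fun x => -(1+2*m2)*(st22+st21*x))
          (fun x => (1-mt2)*(s22+s21*(1-x)) + (2+m2)*(st22+st21*x))
          (fun x => -((s22+s21*(1-x)) + (st22+st21*x)))
          (fun x => (s11+s12) * x - st11 * (1-x))
          (fun x => -(s12 * x + st12 * (1-x)))
          (C (s11+s12) * X - C st11 * (1 - X))
          (-(C s12 * X + C st12 * (1 - X)))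
          (C m2 * (C st22 + C st21 * X))
          (-(C (1+2*m2) * (C st22 + C st21 * X)))
          (C (1-mt2) * (C s22 + C s21 * (1 - X)) + C (2+m2) * (C st22 + C st21 * X))
          (-((C s22 + C s21 * (1 - X)) + (C st22 + C st21 * X)))
          ({0, 1} : Finset ℝ) 1 1 4
          (fun x => by simp only [eval_mul, eval_add, eval_sub, eval_neg, eval_pow, eval_C, eval_X, eval_one]; try ring)
          (fun x => by simp only [eval_mul, eval_add, eval_sub, eval_neg, eval_pow, eval_C, eval_X, eval_one]; try ring)
          (fun x => by simp only [eval_mul, eval_add, eval_sub, eval_neg, eval_pow, eval_C, eval_X, eval_one]; try ring)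
          (fun x => by simp only [eval_mul, eval_add, eval_sub, eval_neg, eval_pow, eval_C, eval_X, eval_one]; try ring)
          (fun x => by simp only [eval_mul, eval_add, eval_sub, eval_neg, eval_pow, eval_C, eval_X, eval_one]; try ring)
          (fun x => by simp only [eval_mul, eval_add, eval_sub, eval_neg, eval_pow, eval_C, eval_X, eval_one]; try ring)
          (fun x y => by simp only [G1, pow_zero, pow_one, one_mul]; ring) hG2 hc3
          ?_ ?_ (fun x h => by
            rcases mul_eq_zero.1 h with h' | h'
            · simp at h'; simp [h']
            · simp at h'; simp [show x = 1 by linarith]) (by intro x hx; simp at hx; rcases hx with h | h <;> simp [h]) (by norm_num)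
      · have h10 : (4:ℕ) = 1 + 3*1 := by norm_num
        rw [h10]
        refine deg_comb ?_ ?_ ?_ ?_ ?_ ?_ <;> compute_degree
      · refine lt_of_eq_of_lt ?_ (mul_neg_of_pos_of_neg hE0 hE1)
        simp only [eval_mul, eval_add, eval_sub, eval_neg, eval_pow, eval_C, eval_X, eval_one]
        norm_num
        ring

    · -- Case B : m1 = 0, 0 < mt1
      rw [← hm1z]
      refine master (G1 s11 s12 st11 st12 0 mt1) (G2 s21 s22 st21 st22 m2 mt2)
          (fun x => m2*(st22+st21*x)) (fun x => -(1+2*m2)*(st22+st21*x))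
          (fun x => (1-mt2)*(s22+s21*(1-x)) + (2+m2)*(st22+st21*x))
          (fun x => -((s22+s21*(1-x)) + (st22+st21*x)))
          (fun x => (s11+s12) * ((1-mt1) - x) * x - st11 * (1-x)^2)
          (fun x => -(s12 * ((1-mt1) - x) * x + st12 * (1-x)^2))
          (C (s11+s12) * (C (1-mt1) - X) * X - C st11 * (1 - X)^2)
          (-(C s12 * (C (1-mt1) - X) * X + C st12 * (1 - X)^2))
          (C m2 * (C st22 + C st21 * X))
          (-(C (1+2*m2) * (C st22 + C st21 * X)))
          (C (1-mt2) * (C s22 + C s21 * (1 - X)) + C (2+m2) * (C st22 + C st21 * X))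
          (-((C s22 + C s21 * (1 - X)) + (C st22 + C st21 * X)))
          ({0} : Finset ℝ) 1 0 7
          (fun x => by simp only [eval_mul, eval_add, eval_sub, eval_neg, eval_pow, eval_C, eval_X, eval_one]; try ring)
          (fun x => by simp only [eval_mul, eval_add, eval_sub, eval_neg, eval_pow, eval_C, eval_X, eval_one]; try ring)
          (fun x => by simp only [eval_mul, eval_add, eval_sub, eval_neg, eval_pow, eval_C, eval_X, eval_one]; try ring)
          (fun x => by simp only [eval_mul, eval_add, eval_sub, eval_neg, eval_pow, eval_C, eval_X, eval_one]; try ring)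
          (fun x => by simp only [eval_mul, eval_add, eval_sub, eval_neg, eval_pow, eval_C, eval_X, eval_one]; try ring)
          (fun x => by simp only [eval_mul, eval_add, eval_sub, eval_neg, eval_pow, eval_C, eval_X, eval_one]; try ring)
          (fun x y => by simp only [G1, pow_zero, pow_one, one_mul]; ring) hG2 hc3
          ?_ ?_ (fun x h => by norm_num at h; simp [h]) (by intro x hx; simp at hx; simp [hx]) (by simp)
      · have h10 : (7:ℕ) = 1 + 3*2 := by norm_num
        rw [h10]
        refine deg_comb ?_ ?_ ?_ ?_ ?_ ?_ <;> compute_degree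
      · have hneg : mt1^3 * E1 < 0 := mul_neg_of_pos_of_neg (pow_pos hmt1pos 3) hE1
        refine lt_of_eq_of_lt ?_ (mul_neg_of_pos_of_neg hE0 hneg)
        simp only [eval_mul, eval_add, eval_sub, eval_neg, eval_pow, eval_C, eval_X, eval_one]
        norm_num
        ring

  rcases eq_or_lt_of_le hmt10 with hmt1z | hmt1pos
  · -- Case C : 0 < m1, mt1 = 0
    rw [← hmt1z]
    refine master (G1 s11 s12 st11 st12 m1 0) (G2 s21 s22 st21 st22 m2 mt2)
        (fun x => m2*(st22+st21*x)) (fun x => -(1+2*m2)*(st22+st21*x))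
        (fun x => (1-mt2)*(s22+s21*(1-x)) + (2+m2)*(st22+st21*x))
        (fun x => -((s22+s21*(1-x)) + (st22+st21*x)))
        (fun x => (s11+s12) * x^2 - st11 * (x - m1) * (1-x))
        (fun x => -(s12 * x^2 + st12 * (x - m1) * (1-x)))
        (C (s11+s12) * X^2 - C st11 * (X - C m1) * (1 - X))
        (-(C s12 * X^2 + C st12 * (X - C m1) * (1 - X)))
        (C m2 * (C st22 + C st21 * X))
        (-(C (1+2*m2) * (C st22 + C st21 * X)))
        (C (1-mt2) * (C s22 + C s21 * (1 - X)) + C (2+m2) * (C st22 + C st21 * X))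
        (-((C s22 + C s21 * (1 - X)) + (C st22 + C st21 * X)))
        ({1} : Finset ℝ) 0 1 7
        (fun x => by simp only [eval_mul, eval_add, eval_sub, eval_neg, eval_pow, eval_C, eval_X, eval_one]; try ring)
        (fun x => by simp only [eval_mul, eval_add, eval_sub, eval_neg, eval_pow, eval_C, eval_X, eval_one]; try ring)
        (fun x => by simp only [eval_mul, eval_add, eval_sub, eval_neg, eval_pow, eval_C, eval_X, eval_one]; try ring)
        (fun x => by simp only [eval_mul, eval_add, eval_sub, eval_neg, eval_pow, eval_C, eval_X, eval_one]; try ring)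
        (fun x => by simp only [eval_mul, eval_add, eval_sub, eval_neg, eval_pow, eval_C, eval_X, eval_one]; try ring)
        (fun x => by simp only [eval_mul, eval_add, eval_sub, eval_neg, eval_pow, eval_C, eval_X, eval_one]; try ring)
        (fun x y => by simp only [G1, pow_zero, pow_one, one_mul]; ring) hG2 hc3
        ?_ ?_ (fun x h => by norm_num at h; simp [show x = 1 by linarith]) (by intro x hx; simp at hx; simp [hx]) (by simp)
    · have h10 : (7:ℕ) = 1 + 3*2 := by norm_num
      rw [h10]
      refine deg_comb ?_ ?_ ?_ ?_ ?_ ?_ <;> compute_degree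
    · have hpos : (0:ℝ) < m1^3 * E0 := mul_pos (pow_pos hm1pos 3) hE0
      refine lt_of_eq_of_lt ?_ (mul_neg_of_pos_of_neg hpos hE1)
      simp only [eval_mul, eval_add, eval_sub, eval_neg, eval_pow, eval_C, eval_X, eval_one]
      norm_num
      ring

  -- Case A : 0 < m1, 0 < mt1
  refine master (G1 s11 s12 st11 st12 m1 mt1) (G2 s21 s22 st21 st22 m2 mt2)
      (fun x => m2*(st22+st21*x)) (fun x => -(1+2*m2)*(st22+st21*x))
      (fun x => (1-mt2)*(s22+s21*(1-x)) + (2+m2)*(st22+st21*x))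
      (fun x => -((s22+s21*(1-x)) + (st22+st21*x)))
      (fun x => (s11+s12) * ((1-mt1) - x) * x^2 - st11 * (x - m1) * (1-x)^2)
      (fun x => -(s12 * ((1-mt1) - x) * x^2 + st12 * (x - m1) * (1-x)^2))
      (C (s11+s12) * (C (1-mt1) - X) * X^2 - C st11 * (X - C m1) * (1 - X)^2)
      (-(C s12 * (C (1-mt1) - X) * X^2 + C st12 * (X - C m1) * (1 - X)^2))
      (C m2 * (C st22 + C st21 * X))
      (-(C (1+2*m2) * (C st22 + C st21 * X)))
      (C (1-mt2) * (C s22 + C s21 * (1 - X)) + C (2+m2) * (C st22 + C st21 * X))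
      (-((C s22 + C s21 * (1 - X)) + (C st22 + C st21 * X)))
      (∅ : Finset ℝ) 0 0 10
      (fun x => by simp only [eval_mul, eval_add, eval_sub, eval_neg, eval_pow, eval_C, eval_X, eval_one]; try ring)
      (fun x => by simp only [eval_mul, eval_add, eval_sub, eval_neg, eval_pow, eval_C, eval_X, eval_one]; try ring)
      (fun x => by simp only [eval_mul, eval_add, eval_sub, eval_neg, eval_pow, eval_C, eval_X, eval_one]; try ring)
      (fun x => by simp only [eval_mul, eval_add, eval_sub, eval_neg, eval_pow, eval_C, eval_X, eval_one]; try ring)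
      (fun x => by simp only [eval_mul, eval_add, eval_sub, eval_neg, eval_pow, eval_C, eval_X, eval_one]; try ring)
      (fun x => by simp only [eval_mul, eval_add, eval_sub, eval_neg, eval_pow, eval_C, eval_X, eval_one]; try ring)
      (fun x y => by simp only [G1, pow_zero, pow_one, one_mul]; ring) hG2 hc3
      ?_ ?_ (fun x h => by norm_num at h) (by simp) (by simp)
  · have h10 : (10:ℕ) = 1 + 3*3 := by norm_num
    rw [h10]
    refine deg_comb ?_ ?_ ?_ ?_ ?_ ?_ <;> compute_degree
  · have hpos : (0:ℝ) < m1^3 * E0 := mul_pos (pow_pos hm1pos 3) hE0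
    have hneg : mt1^3 * E1 < 0 := mul_neg_of_pos_of_neg (pow_pos hmt1pos 3) hE1
    refine lt_of_eq_of_lt ?_ (mul_neg_of_pos_of_neg hpos hneg)
    simp only [eval_mul, eval_add, eval_sub, eval_neg, eval_pow, eval_C, eval_X, eval_one]
    norm_num
    ring
end

section
/- For every real σ > 0, the three critical mutation values satisfy the strict chain of inequalities 0 < μ₁(σ) < μ₂(σ) < μ₃(σ) < 1, where μ₁(σ) = (√(2σ² + 4σ + 4) − σ − 2)/σ², μ₂(σ) = 1/(σ + 4), and μ₃(σ) = (σ + 1)/(3σ + 4). -/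
noncomputable def mu1 (σ : ℝ) : ℝ := (Real.sqrt (2 * σ^2 + 4 * σ + 4) - σ - 2) / σ^2

noncomputable def mu2 (σ : ℝ) : ℝ := 1 / (σ + 4)

noncomputable def mu3 (σ : ℝ) : ℝ := (σ + 1) / (3 * σ + 4)

theorem critical_mutation_values_chain (σ : ℝ) (hσ : 0 < σ) :
    0 < mu1 σ ∧ mu1 σ < mu2 σ ∧ mu2 σ < mu3 σ ∧ mu3 σ < 1 := by
  have hA : (0:ℝ) ≤ 2 * σ^2 + 4 * σ + 4 := by positivity
  set s := Real.sqrt (2 * σ^2 + 4 * σ + 4) with hs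
  have hs0 : 0 ≤ s := Real.sqrt_nonneg _
  have hs2 : s^2 = 2 * σ^2 + 4 * σ + 4 := Real.sq_sqrt hA
  have hgt : σ + 2 < s := by nlinarith [sq_nonneg (s - (σ + 2))]
  refine ⟨?_, ?_, ?_, ?_⟩
  · exact div_pos (by linarith) (by positivity)
  · unfold mu1 mu2
    rw [div_lt_div_iff₀ (by positivity) (by linarith)]
    have key : s * (σ + 4) < 2*σ^2 + 6*σ + 8 := by
      nlinarith [sq_nonneg (s * (σ + 4) - (2*σ^2 + 6*σ + 8)), hs2, hs0, hσ,
        mul_pos hσ hσ, mul_pos (mul_pos hσ hσ) hσ]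
    nlinarith [key]
  · unfold mu2 mu3
    rw [div_lt_div_iff₀ (by linarith) (by linarith)]
    nlinarith
  · unfold mu3
    rw [div_lt_one (by linarith)]
    linarith
end

section
/- Let σ > 0 and let μ satisfy μ₃(σ) < μ ≤ 1, where μ₃(σ) = (σ + 1)/(3σ + 4). Then the uniform state (1/2, 1/2) is the unique equilibrium of the fully symmetric convergence–divergence game in the unit square: {(x,y) ∈ [0,1] × [0,1] : F₁(x,y) = 0 and F₂(x,y) = 0} = {(1/2, 1/2)}. -/
noncomputable def F1 (σ μ x y : ℝ) : ℝ :=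
  ((1 - x) - μ) * x * (x + σ * x * (1 - y)) - (x - μ) * (1 - x) * ((1 - x) + σ * (1 - x) * y)

noncomputable def F2 (σ μ x y : ℝ) : ℝ :=
  ((1 - y) - μ) * y * (y + σ * y * (1 - x)) - (y - μ) * (1 - y) * ((1 - y) + σ * (1 - y) * x)

/-- Convex combination of two positive numbers is positive. -/
private lemma pos_combo (a b t : ℝ) (ha : 0 < a) (hb : 0 < b) (ht0 : 0 ≤ t) (ht1 : t ≤ 1) :
    0 < (1 - t) * a + t * b := by nlinarith [mul_pos ha hb, sq_nonneg a, sq_nonneg b, mul_nonneg (sub_nonneg.2 ht1) ha.le, mul_nonneg ht0 hb.le]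

/-- Abstract core: from the two transformed equilibrium equations and the strict
dominance `C(M+t²) > σ|Kt²−E|`, conclude `U = V = 0`. -/
private lemma core (σ C M K E U V : ℝ) (hM : 0 < M)
    (hLu : 0 < C * (M + U ^ 2) - σ * (K * U ^ 2 - E))
    (hRu : 0 < C * (M + U ^ 2) + σ * (K * U ^ 2 - E))
    (hLv : 0 < C * (M + V ^ 2) - σ * (K * V ^ 2 - E))
    (hRv : 0 < C * (M + V ^ 2) + σ * (K * V ^ 2 - E))
    (h1 : C * U * (M + U ^ 2) = σ * V * (K * U ^ 2 - E))
    (h2 : C * V * (M + V ^ 2) = σ * U * (K * V ^ 2 - E)) :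
    U = 0 ∧ V = 0 := by
  have e1 : V ^ 2 * ((C * (M + U ^ 2) - σ * (K * U ^ 2 - E)) *
      (C * (M + U ^ 2) + σ * (K * U ^ 2 - E)))
      = C ^ 2 * (M + U ^ 2) ^ 2 * (V ^ 2 - U ^ 2) := by
    linear_combination (C * U * (M + U ^ 2) + σ * V * (K * U ^ 2 - E)) * h1
  have e2 : U ^ 2 * ((C * (M + V ^ 2) - σ * (K * V ^ 2 - E)) *
      (C * (M + V ^ 2) + σ * (K * V ^ 2 - E)))
      = C ^ 2 * (M + V ^ 2) ^ 2 * (U ^ 2 - V ^ 2) := by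
    linear_combination (C * V * (M + V ^ 2) + σ * U * (K * V ^ 2 - E)) * h2
  have hsum : V ^ 2 * ((C * (M + U ^ 2) - σ * (K * U ^ 2 - E)) *
      (C * (M + U ^ 2) + σ * (K * U ^ 2 - E)))
      + U ^ 2 * ((C * (M + V ^ 2) - σ * (K * V ^ 2 - E)) *
      (C * (M + V ^ 2) + σ * (K * V ^ 2 - E)))
      = -(C ^ 2 * (U ^ 2 - V ^ 2) ^ 2 * (2 * M + U ^ 2 + V ^ 2)) := by
    linear_combination e1 + e2
  have hnn : 0 ≤ C ^ 2 * (U ^ 2 - V ^ 2) ^ 2 * (2 * M + U ^ 2 + V ^ 2) := by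
    have h2M : 0 ≤ 2 * M + U ^ 2 + V ^ 2 := by nlinarith [sq_nonneg U, sq_nonneg V]
    exact mul_nonneg (mul_nonneg (sq_nonneg C) (sq_nonneg _)) h2M
  have hV2 : V ^ 2 ≤ 0 := by
    nlinarith [mul_pos hLu hRu, mul_nonneg (sq_nonneg U) (mul_pos hLv hRv).le, sq_nonneg V]
  have hU2 : U ^ 2 ≤ 0 := by
    nlinarith [mul_pos hLv hRv, mul_nonneg (sq_nonneg V) (mul_pos hLu hRu).le, sq_nonneg U]
  constructor
  · exact pow_eq_zero_iff two_ne_zero |>.mp (le_antisymm hU2 (sq_nonneg U))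
  · exact pow_eq_zero_iff two_ne_zero |>.mp (le_antisymm hV2 (sq_nonneg V))

theorem phase_I_unique_equilibrium (σ μ : ℝ) (hσ : 0 < σ)
    (hlo : (σ + 1) / (3 * σ + 4) < μ) (hhi : μ ≤ 1) :
    {p : ℝ × ℝ | p ∈ Set.Icc (0:ℝ) 1 ×ˢ Set.Icc (0:ℝ) 1 ∧
        F1 σ μ p.1 p.2 = 0 ∧ F2 σ μ p.1 p.2 = 0} = {(1/2, 1/2)} := by
  have hσ4 : (0:ℝ) < 3 * σ + 4 := by linarith
  have hkey : σ + 1 < μ * (3 * σ + 4) := by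
    rw [div_lt_iff₀ hσ4] at hlo; linarith
  have hμ4 : 1 < 4 * μ := by nlinarith
  have hL0 : 0 < μ * (σ + 4) - 1 := by nlinarith [mul_pos hσ hσ]
  ext p
  obtain ⟨x, y⟩ := p
  simp only [Set.mem_setOf_eq, Set.mem_prod, Set.mem_Icc, Set.mem_singleton_iff,
    Prod.mk.injEq]
  constructor
  · rintro ⟨⟨⟨hx0, hx1⟩, hy0, hy1⟩, hF1, hF2⟩
    simp only [F1] at hF1
    simp only [F2] at hF2
    have hU2 : (2 * x - 1) ^ 2 ≤ 1 := by nlinarith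
    have hV2 : (2 * y - 1) ^ 2 ≤ 1 := by nlinarith
    -- set constants
    have hLu : 0 < (2 + σ) * ((4 * μ - 1) + (2 * x - 1) ^ 2)
        - σ * ((1 + 2 * μ) * (2 * x - 1) ^ 2 - (1 - 2 * μ)) := by
      nlinarith [pos_combo (2 * (μ * (σ + 4) - 1)) (8 * μ) ((2 * x - 1) ^ 2)
        (by linarith) (by linarith) (sq_nonneg (2 * x - 1)) hU2]
    have hRu : 0 < (2 + σ) * ((4 * μ - 1) + (2 * x - 1) ^ 2)
        + σ * ((1 + 2 * μ) * (2 * x - 1) ^ 2 - (1 - 2 * μ)) := by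
      nlinarith [pos_combo (2 * (μ * (3 * σ + 4) - (σ + 1))) (8 * μ * (σ + 1)) ((2 * x - 1) ^ 2)
        (by linarith) (by nlinarith) (sq_nonneg (2 * x - 1)) hU2]
    have hLv : 0 < (2 + σ) * ((4 * μ - 1) + (2 * y - 1) ^ 2)
        - σ * ((1 + 2 * μ) * (2 * y - 1) ^ 2 - (1 - 2 * μ)) := by
      nlinarith [pos_combo (2 * (μ * (σ + 4) - 1)) (8 * μ) ((2 * y - 1) ^ 2)
        (by linarith) (by linarith) (sq_nonneg (2 * y - 1)) hV2]
    have hRv : 0 < (2 + σ) * ((4 * μ - 1) + (2 * y - 1) ^ 2)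
        + σ * ((1 + 2 * μ) * (2 * y - 1) ^ 2 - (1 - 2 * μ)) := by
      nlinarith [pos_combo (2 * (μ * (3 * σ + 4) - (σ + 1))) (8 * μ * (σ + 1)) ((2 * y - 1) ^ 2)
        (by linarith) (by nlinarith) (sq_nonneg (2 * y - 1)) hV2]
    have h1 : (2 + σ) * (2 * x - 1) * ((4 * μ - 1) + (2 * x - 1) ^ 2)
        = σ * (2 * y - 1) * ((1 + 2 * μ) * (2 * x - 1) ^ 2 - (1 - 2 * μ)) := by
      linear_combination (-8) * hF1
    have h2 : (2 + σ) * (2 * y - 1) * ((4 * μ - 1) + (2 * y - 1) ^ 2)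
        = σ * (2 * x - 1) * ((1 + 2 * μ) * (2 * y - 1) ^ 2 - (1 - 2 * μ)) := by
      linear_combination (-8) * hF2
    obtain ⟨hU, hV⟩ := core σ (2 + σ) (4 * μ - 1) (1 + 2 * μ) (1 - 2 * μ)
      (2 * x - 1) (2 * y - 1) (by linarith) hLu hRu hLv hRv h1 h2
    constructor <;> linarith
  · rintro ⟨hx, hy⟩
    subst hx hy
    refine ⟨⟨⟨by norm_num, by norm_num⟩, by norm_num, by norm_num⟩, ?_, ?_⟩ <;>
      (simp only [F1, F2]; ring)
end

section
/- Let σ > 0 and μ = 0. Then the set of equilibria of the fully symmetric convergence–divergence game in the unit square is exactly the nine-point set {(0,0), (0,1), (1,0), (1,1), (1/2, 1/2), (1/(2+σ), 0), ((1+σ)/(2+σ), 1), (0, 1/(2+σ)), (1, (1+σ)/(2+σ))}. -/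
theorem zero_mutation_equilibria (σ : ℝ) (hσ : 0 < σ) :
    {p : ℝ × ℝ | p ∈ Set.Icc (0:ℝ) 1 ×ˢ Set.Icc (0:ℝ) 1 ∧
        F1 σ 0 p.1 p.2 = 0 ∧ F2 σ 0 p.1 p.2 = 0} =
      {(0, 0), (0, 1), (1, 0), (1, 1), (1/2, 1/2),
       (1 / (2 + σ), 0), ((1 + σ) / (2 + σ), 1),
       (0, 1 / (2 + σ)), (1, (1 + σ) / (2 + σ))} := by
  have hpos : (0:ℝ) < 2 + σ := by linarith
  have hne : (2 + σ) ≠ 0 := ne_of_gt hpos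
  ext ⟨x, y⟩
  simp only [Set.mem_setOf_eq, Set.mem_prod, Set.mem_Icc, Set.mem_insert_iff,
    Set.mem_singleton_iff, Prod.mk.injEq]
  constructor
  · rintro ⟨⟨⟨hx0, hx1⟩, hy0, hy1⟩, h1, h2⟩
    have e1 : x * (1 - x) * ((2 + σ) * x - (1 + σ * y)) = 0 := by
      rw [← h1]; unfold F1; ring
    have e2 : y * (1 - y) * ((2 + σ) * y - (1 + σ * x)) = 0 := by
      rw [← h2]; unfold F2; ring
    have c1 : x = 0 ∨ x = 1 ∨ (2 + σ) * x = 1 + σ * y := by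
      rcases mul_eq_zero.1 e1 with h | h
      · rcases mul_eq_zero.1 h with h | h
        · exact Or.inl h
        · exact Or.inr (Or.inl (by linarith))
      · exact Or.inr (Or.inr (by linarith))
    have c2 : y = 0 ∨ y = 1 ∨ (2 + σ) * y = 1 + σ * x := by
      rcases mul_eq_zero.1 e2 with h | h
      · rcases mul_eq_zero.1 h with h | h
        · exact Or.inl h
        · exact Or.inr (Or.inl (by linarith))
      · exact Or.inr (Or.inr (by linarith))
    rcases c1 with rfl | rfl | hx
    · rcases c2 with rfl | rfl | hy
      · exact Or.inl ⟨rfl, rfl⟩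
      · exact Or.inr (Or.inl ⟨rfl, rfl⟩)
      · refine Or.inr (Or.inr (Or.inr (Or.inr (Or.inr (Or.inr (Or.inr (Or.inl ⟨rfl, ?_⟩)))))))
        field_simp
        linarith
    · rcases c2 with rfl | rfl | hy
      · exact Or.inr (Or.inr (Or.inl ⟨rfl, rfl⟩))
      · exact Or.inr (Or.inr (Or.inr (Or.inl ⟨rfl, rfl⟩)))
      · refine Or.inr (Or.inr (Or.inr (Or.inr (Or.inr (Or.inr (Or.inr (Or.inr ⟨rfl, ?_⟩)))))))
        field_simp
        linarith
    · rcases c2 with rfl | rfl | hy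
      · refine Or.inr (Or.inr (Or.inr (Or.inr (Or.inr (Or.inl ⟨?_, rfl⟩)))))
        field_simp
        linarith
      · refine Or.inr (Or.inr (Or.inr (Or.inr (Or.inr (Or.inr (Or.inl ⟨?_, rfl⟩))))))
        field_simp
        linarith
      · have hxy : x = y := by nlinarith
        subst hxy
        have : x = 1 / 2 := by nlinarith
        exact Or.inr (Or.inr (Or.inr (Or.inr (Or.inl ⟨this, this⟩))))
  · have hb0 : (0:ℝ) ≤ 1 / (2 + σ) := by positivity
    have hb1 : 1 / (2 + σ) ≤ 1 := by rw [div_le_one hpos]; linarith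
    have hc0 : (0:ℝ) ≤ (1 + σ) / (2 + σ) := by positivity
    have hc1 : (1 + σ) / (2 + σ) ≤ 1 := by rw [div_le_one hpos]; linarith
    rintro (⟨rfl, rfl⟩ | ⟨rfl, rfl⟩ | ⟨rfl, rfl⟩ | ⟨rfl, rfl⟩ | ⟨rfl, rfl⟩ |
      ⟨rfl, rfl⟩ | ⟨rfl, rfl⟩ | ⟨rfl, rfl⟩ | ⟨rfl, rfl⟩) <;>
      refine ⟨⟨⟨?_, ?_⟩, ?_, ?_⟩, ?_, ?_⟩ <;>
      (try simp only [F1, F2]) <;>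
      first
        | positivity
        | (rw [div_le_one hpos]; linarith)
        | (norm_num; done)
        | (field_simp; ring)
end

section
/- For all real σ and μ, the map F : ℝ × ℝ → ℝ × ℝ, F(x,y) = (F₁(x,y), F₂(x,y)), is differentiable at (1/2, 1/2), and its Fréchet derivative there has eigenvector (1, 1) with eigenvalue λ_D = 1/2 − (σ + 4)·μ/2 and eigenvector (1, −1) with eigenvalue λ_D̃ = (σ + 1)/2 − (3σ + 4)·μ/2; that is, the derivative maps (1,1) to λ_D·(1,1) and (1,−1) to λ_D̃·(1,−1). -/
noncomputable def F (σ μ : ℝ) : ℝ × ℝ → ℝ × ℝ :=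
  fun p => (F1 σ μ p.1 p.2, F2 σ μ p.1 p.2)

lemma hasDerivAt_cubic (c1 c3 : ℝ) :
    HasDerivAt (fun t : ℝ => c1 * t + c3 * t ^ 3) c1 0 := by
  have h1 : HasDerivAt (fun t : ℝ => c1 * t) (c1 * 1) 0 := (hasDerivAt_id 0).const_mul c1
  have h3 : HasDerivAt (fun t : ℝ => c3 * t ^ 3) (c3 * (3 * (0:ℝ) ^ 2)) 0 :=
    (hasDerivAt_pow 3 (0:ℝ)).const_mul c3
  exact (h1.add h3).congr_deriv (by simp)

lemma diffAt (σ μ : ℝ) : DifferentiableAt ℝ (F σ μ) (1/2, 1/2) := by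
  unfold F F1 F2
  fun_prop

theorem jacobian_at_uniform_state (σ μ : ℝ) :
    DifferentiableAt ℝ (F σ μ) (1/2, 1/2) ∧
    fderiv ℝ (F σ μ) (1/2, 1/2) (1, 1) =
      (1/2 - (σ + 4) * μ / 2) • ((1 : ℝ), (1 : ℝ)) ∧
    fderiv ℝ (F σ μ) (1/2, 1/2) (1, -1) =
      ((σ + 1)/2 - (3 * σ + 4) * μ / 2) • ((1 : ℝ), (-1 : ℝ)) := by
  have hd := diffAt σ μ
  refine ⟨hd, ?_, ?_⟩
  · rw [← hd.lineDeriv_eq_fderiv]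
    have e1 : (fun t : ℝ => F σ μ (((1:ℝ)/2, (1:ℝ)/2) + t • ((1:ℝ), (1:ℝ))))
        = fun t : ℝ => ((1/2 - (σ + 4) * μ / 2) * t + (-2 + 2 * σ * μ) * t ^ 3,
            (1/2 - (σ + 4) * μ / 2) * t + (-2 + 2 * σ * μ) * t ^ 3) := by
      funext t
      simp only [F, F1, F2, Prod.smul_mk, smul_eq_mul, Prod.mk_add_mk, mul_one]
      exact Prod.ext (by ring) (by ring)
    rw [lineDeriv, e1]
    have h := ((hasDerivAt_cubic (1/2 - (σ + 4) * μ / 2) (-2 + 2 * σ * μ)).prodMk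
      (hasDerivAt_cubic (1/2 - (σ + 4) * μ / 2) (-2 + 2 * σ * μ))).deriv
    rw [h]
    simp [Prod.ext_iff]
  · rw [← hd.lineDeriv_eq_fderiv]
    have e1 : (fun t : ℝ => F σ μ (((1:ℝ)/2, (1:ℝ)/2) + t • ((1:ℝ), (-1:ℝ))))
        = fun t : ℝ => (((σ + 1)/2 - (3 * σ + 4) * μ / 2) * t + (-2 - 2 * σ - 2 * σ * μ) * t ^ 3,
            (-((σ + 1)/2 - (3 * σ + 4) * μ / 2)) * t + (2 + 2 * σ + 2 * σ * μ) * t ^ 3) := by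
      funext t
      simp only [F, F1, F2, Prod.smul_mk, smul_eq_mul, Prod.mk_add_mk, mul_one]
      exact Prod.ext (by ring) (by ring)
    rw [lineDeriv, e1]
    have h := ((hasDerivAt_cubic ((σ + 1)/2 - (3 * σ + 4) * μ / 2) (-2 - 2 * σ - 2 * σ * μ)).prodMk
      (hasDerivAt_cubic (-((σ + 1)/2 - (3 * σ + 4) * μ / 2)) (2 + 2 * σ + 2 * σ * μ))).deriv
    rw [h]
    simp [Prod.ext_iff]
end

section
/- Let σ > 0 and define μ₁(σ) = (√(2σ² + 4σ + 4) − σ − 2)/σ², μ₂(σ) = 1/(σ + 4), λ₁(μ) = (σ + 4)μ − 1 and λ₂(μ) = (σ²μ² + 2(σ + 2)μ − 1)/(1 − σμ). Then: (i) if μ₁(σ) < μ < μ₂(σ), then λ₁(μ) < 0 < λ₂(μ) (the on-diagonal equilibrium d₁ is a saddle); and (ii) if 0 < μ < μ₁(σ), then λ₁(μ) < 0 and λ₂(μ) < 0 (the on-diagonal equilibrium d₁ is a sink). -/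
noncomputable def lambda1 (σ μ : ℝ) : ℝ := (σ + 4) * μ - 1

noncomputable def lambda2 (σ μ : ℝ) : ℝ :=
  (σ^2 * μ^2 + 2 * (σ + 2) * μ - 1) / (1 - σ * μ)

theorem d1_saddle_or_sink (σ : ℝ) (hσ : 0 < σ) :
    (∀ μ : ℝ, mu1 σ < μ → μ < mu2 σ → lambda1 σ μ < 0 ∧ 0 < lambda2 σ μ) ∧
    (∀ μ : ℝ, 0 < μ → μ < mu1 σ → lambda1 σ μ < 0 ∧ lambda2 σ μ < 0) := by
  have hσ4 : (0:ℝ) < σ + 4 := by linarith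
  have hs2 : (0:ℝ) < σ^2 := by positivity
  set r := Real.sqrt (2 * σ^2 + 4 * σ + 4) with hr
  have hr0 : 0 ≤ r := Real.sqrt_nonneg _
  have hr2 : r^2 = 2 * σ^2 + 4 * σ + 4 := Real.sq_sqrt (by nlinarith)
  have hrgt : σ + 2 < r := by nlinarith
  set m1 := mu1 σ with hm1
  have hm1eq : m1 * σ^2 = r - σ - 2 := by
    rw [hm1, mu1]; field_simp
    rw [hr]; ring_nf
  have hm1pos : 0 < m1 := by
    rw [hm1, mu1]; apply div_pos (by linarith) hs2
  have hroot : σ^2 * m1^2 + 2*(σ+2)*m1 - 1 = 0 := by nlinarith [hm1eq, hr2]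
  have hm12 : m1 < mu2 σ := by
    rw [mu2]
    rw [lt_div_iff₀ hσ4]
    nlinarith [hroot, hm1pos]
  constructor
  · intro μ h1 h2
    rw [mu2, lt_div_iff₀ hσ4] at h2
    have hden : 0 < 1 - σ * μ := by nlinarith [hm1pos]
    constructor
    · rw [lambda1]; nlinarith
    · rw [lambda2]
      apply div_pos _ hden
      nlinarith [hroot, mul_pos (sub_pos.mpr h1)
        (show 0 < σ^2*(μ+m1)+2*(σ+2) by nlinarith [hm1pos])]
  · intro μ h0 h1
    have h2 : μ < mu2 σ := lt_trans h1 hm12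
    rw [mu2, lt_div_iff₀ hσ4] at h2
    have hden : 0 < 1 - σ * μ := by nlinarith
    constructor
    · rw [lambda1]; nlinarith
    · rw [lambda2]
      apply div_neg_of_neg_of_pos _ hden
      nlinarith [hroot, mul_pos (sub_pos.mpr h1)
        (show 0 < σ^2*(μ+m1)+2*(σ+2) by nlinarith [hm1pos])]
end
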